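/- Let γ > 3, ψ(x) = x^{-1/(γ-1)} on (0,1], g(x) = ∫₀¹ ψ(b)(1 − exp(−x ψ(b))) db, and θ_c = 1/∫₀¹ ψ(x)² dx = (γ−3)/(γ−1). Then for θ > 0 the equation A = θ g(A) has a solution A > 0 if and only if θ > θ_c, and when θ > θ_c the positive solution is unique. -/

import Mathlib

open MeasureTheory Filter Set Topology

set_option maxHeartbeats 1600000

private lemma aux_one_sub_exp_le (t : ℝ) : 1 - Real.exp (-t) ≤ t := by
  have := Real.add_one_le_exp (-t); linarith

private lemma aux_one_sub_exp_lt {t : ℝ} (ht : t ≠ 0) : 1 - Real.exp (-t) < t := by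
  have := Real.add_one_lt_exp (neg_ne_zero.mpr ht); linarith

private lemma aux_one_sub_exp_nonneg {t : ℝ} (ht : 0 ≤ t) : 0 ≤ 1 - Real.exp (-t) := by
  have : Real.exp (-t) ≤ Real.exp 0 := Real.exp_le_exp.mpr (by linarith)
  simpa using this

private lemma aux_one_sub_exp_le_one {t : ℝ} (ht : 0 ≤ t) : 1 - Real.exp (-t) ≤ 1 := by
  have := Real.exp_pos (-t); linarith

private lemma aux_slope_anti : StrictAntiOn (fun s : ℝ => (1 - Real.exp (-s)) / s) (Ioi 0) := by
  apply strictAntiOn_of_deriv_neg (convex_Ioi 0)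
  · apply ContinuousOn.div
    · fun_prop
    · exact continuousOn_id
    · intro x hx; exact ne_of_gt hx
  · intro x hx
    rw [interior_Ioi] at hx
    have hx0 : (x:ℝ) ≠ 0 := ne_of_gt hx
    have h1 : HasDerivAt (fun s : ℝ => 1 - Real.exp (-s)) (Real.exp (-x)) x := by
      have h0 : HasDerivAt (fun s : ℝ => Real.exp (-s)) (Real.exp (-x) * (-1)) x :=
        (hasDerivAt_neg x).exp
      exact ((hasDerivAt_const x (1:ℝ)).sub h0).congr_deriv (by ring)
    have h2 : HasDerivAt (fun s : ℝ => (1 - Real.exp (-s)) / s)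
        ((Real.exp (-x) * x - (1 - Real.exp (-x)) * 1) / x ^ 2) x := by
      exact h1.div (hasDerivAt_id x) hx0
    rw [h2.deriv]
    have h3 := Real.add_one_lt_exp hx0
    have h4 : Real.exp (-x) * Real.exp x = 1 := by rw [← Real.exp_add]; simp
    have h5 : (0:ℝ) < Real.exp (-x) := Real.exp_pos _
    have h6 : (0:ℝ) < x ^ 2 := by positivity
    apply div_neg_of_neg_of_pos _ h6
    nlinarith

/-- for `0 < s < t`: `s * (1 - e^{-t}) < t * (1 - e^{-s})` -/
private lemma aux_slope_lt {s t : ℝ} (hs : 0 < s) (hst : s < t) :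
    s * (1 - Real.exp (-t)) < t * (1 - Real.exp (-s)) := by
  have ht : 0 < t := hs.trans hst
  have := aux_slope_anti (mem_Ioi.mpr hs) (mem_Ioi.mpr ht) hst
  rw [div_lt_div_iff₀ ht hs] at this
  linarith

/-- For `γ > 3`, `ψ(x) = x^(-1/(γ-1))`,
`g(x) = ∫₀¹ ψ(b)(1 - exp(-x ψ(b))) db`, and `θ_c = 1/∫₀¹ ψ² = (γ-3)/(γ-1)`:
for `θ > 0` the equation `A = θ g(A)` has a positive solution iff `θ > θ_c`, and
for `θ > θ_c` the positive solution is unique. -/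
theorem chungLu_fixed_point_supercritical (γ : ℝ) (hγ : 3 < γ)
    (ψ g : ℝ → ℝ) (θc : ℝ)
    (hψ : ∀ x, ψ x = x ^ (-(1 / (γ - 1))))
    (hg : ∀ x, g x = ∫ b in (0:ℝ)..1, ψ b * (1 - Real.exp (-x * ψ b)))
    (hθc : θc = 1 / ∫ x in (0:ℝ)..1, (ψ x) ^ 2) :
    θc = (γ - 3) / (γ - 1)
    ∧ (∀ θ : ℝ, 0 < θ → ((∃ A : ℝ, 0 < A ∧ A = θ * g A) ↔ θc < θ))
    ∧ (∀ θ : ℝ, θc < θ → ∃! A : ℝ, 0 < A ∧ A = θ * g A) := by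
  set α : ℝ := 1 / (γ - 1) with hαdef
  have hγ1 : (0:ℝ) < γ - 1 := by linarith
  have hα0 : 0 < α := by positivity
  have hα2 : 2 * α < 1 := by
    rw [hαdef, mul_one_div, div_lt_one hγ1]; linarith
  have hα1 : -(1:ℝ) < -α := by linarith
  have hψ' : ψ = fun x => x ^ (-α) := funext fun x => hψ x
  -- pointwise facts about ψ
  have hψpos : ∀ b ∈ Ioc (0:ℝ) 1, 0 < ψ b := by
    intro b hb; rw [hψ']; exact Real.rpow_pos_of_pos hb.1 _
  have hψ0 : ψ 0 = 0 := by
    rw [hψ']; exact Real.zero_rpow (by linarith)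
  have hψnonneg : ∀ b ∈ Icc (0:ℝ) 1, 0 ≤ ψ b := by
    intro b hb
    rcases eq_or_lt_of_le hb.1 with h | h
    · rw [← h, hψ0]
    · exact (hψpos b ⟨h, hb.2⟩).le
  -- uIoc
  have hIoc : uIoc (0:ℝ) 1 = Ioc (0:ℝ) 1 := uIoc_of_le zero_le_one
  -- integrability of ψ
  have hInt1 : IntervalIntegrable ψ volume 0 1 := by
    rw [hψ']; exact intervalIntegral.intervalIntegrable_rpow' hα1
  -- ψ^2 = x^(-(2α)) on Icc
  have hsq : ∀ b ∈ Icc (0:ℝ) 1, ψ b ^ 2 = b ^ (-(2*α)) := by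
    intro b hb
    rcases eq_or_lt_of_le hb.1 with h | h
    · rw [← h, hψ0]; rw [Real.zero_rpow (by nlinarith)]; ring
    · rw [hψ']
      rw [← Real.rpow_natCast (b ^ (-α)) 2, ← Real.rpow_mul h.le]
      norm_num [mul_comm]
  have hIntSq : IntervalIntegrable (fun b => ψ b ^ 2) volume 0 1 := by
    have h2 : IntervalIntegrable (fun b : ℝ => b ^ (-(2*α))) volume 0 1 :=
      intervalIntegral.intervalIntegrable_rpow' (by linarith)
    apply h2.mono_fun
    · rw [hψ']; apply Measurable.aestronglyMeasurable; fun_prop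
    · rw [hIoc, EventuallyLE, ae_restrict_iff' measurableSet_Ioc]
      filter_upwards with b hb
      rw [hsq b ⟨hb.1.le, hb.2⟩]
  -- value of ∫ ψ^2
  have hSqVal : (∫ x in (0:ℝ)..1, ψ x ^ 2) = 1 / (1 - 2*α) := by
    rw [intervalIntegral.integral_congr (g := fun b : ℝ => b ^ (-(2*α)))
      (by rw [uIcc_of_le zero_le_one]; exact fun b hb => hsq b hb)]
    rw [integral_rpow (Or.inl (by linarith))]
    rw [Real.one_rpow, Real.zero_rpow (by linarith)]
    ring_nf
  have hθcval : θc = 1 - 2*α := by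
    rw [hθc, hSqVal, one_div_one_div]
  have hθcpos : 0 < θc := by rw [hθcval]; linarith
  -- integrability of the integrand of g
  have hIntF : ∀ x : ℝ, 0 ≤ x →
      IntervalIntegrable (fun b => ψ b * (1 - Real.exp (-x * ψ b))) volume 0 1 := by
    intro x hx
    apply hInt1.mono_fun
    · rw [hψ']; apply Measurable.aestronglyMeasurable; fun_prop
    · rw [hIoc, EventuallyLE, ae_restrict_iff' measurableSet_Ioc]
      filter_upwards with b hb
      have hb0 := hψpos b hb
      have ht : 0 ≤ x * ψ b := mul_nonneg hx hb0.le
      have h1 : 0 ≤ 1 - Real.exp (-(x * ψ b)) := aux_one_sub_exp_nonneg ht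
      have h2 : 1 - Real.exp (-(x * ψ b)) ≤ 1 := aux_one_sub_exp_le_one ht
      rw [neg_mul]
      simp only [Real.norm_eq_abs, abs_mul, abs_of_pos hb0, abs_of_nonneg h1]
      nlinarith
  -- g x ≤ C for x ≥ 0
  set C : ℝ := ∫ b in (0:ℝ)..1, ψ b with hCdef
  have hC0 : 0 ≤ C := by
    rw [hCdef]
    apply intervalIntegral.integral_nonneg zero_le_one
    intro b hb; exact hψnonneg b hb
  have hgle : ∀ x : ℝ, 0 ≤ x → g x ≤ C := by
    intro x hx
    rw [hg, hCdef]
    apply intervalIntegral.integral_mono_on zero_le_one (hIntF x hx) hInt1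
    intro b hb
    have hb0 := hψnonneg b hb
    have ht : 0 ≤ x * ψ b := mul_nonneg hx hb0
    have h2 : 1 - Real.exp (-(x * ψ b)) ≤ 1 := aux_one_sub_exp_le_one ht
    rw [neg_mul]
    nlinarith
  -- strict upper bound: g A < A * (1/(1-2α)) for A > 0
  have hglt : ∀ A : ℝ, 0 < A → g A < A * (1 / (1 - 2*α)) := by
    intro A hA
    have hpos : 0 < ∫ b in (0:ℝ)..1,
        (A * ψ b ^ 2 - ψ b * (1 - Real.exp (-A * ψ b))) := by
      apply intervalIntegral.intervalIntegral_pos_of_pos_on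
      · exact (hIntSq.const_mul A).sub (hIntF A hA.le)
      · intro b hb
        have hb0 := hψpos b ⟨hb.1, hb.2.le⟩
        have ht : 0 < A * ψ b := mul_pos hA hb0
        have h1 : 1 - Real.exp (-(A * ψ b)) < A * ψ b := aux_one_sub_exp_lt ht.ne'
        rw [neg_mul]
        nlinarith
      · exact zero_lt_one
    rw [intervalIntegral.integral_sub (hIntSq.const_mul A) (hIntF A hA.le),
      intervalIntegral.integral_const_mul, hSqVal] at hpos
    rw [hg]
    linarith
  -- strict "antitone of g(x)/x": 0 < x < y → x * g y < y * g x
  have hanti : ∀ x y : ℝ, 0 < x → x < y → x * g y < y * g x := by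
    intro x y hx hxy
    have hy : 0 < y := hx.trans hxy
    have hpos : 0 < ∫ b in (0:ℝ)..1,
        (y * (ψ b * (1 - Real.exp (-x * ψ b))) - x * (ψ b * (1 - Real.exp (-y * ψ b)))) := by
      apply intervalIntegral.intervalIntegral_pos_of_pos_on
      · exact ((hIntF x hx.le).const_mul y).sub ((hIntF y hy.le).const_mul x)
      · intro b hb
        have hb0 := hψpos b ⟨hb.1, hb.2.le⟩
        have hst : x * ψ b < y * ψ b := by
          exact mul_lt_mul_of_pos_right hxy hb0
        have h := aux_slope_lt (mul_pos hx hb0) hst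
        rw [neg_mul, neg_mul]
        nlinarith [h]
      · exact zero_lt_one
    rw [intervalIntegral.integral_sub ((hIntF x hx.le).const_mul y)
      ((hIntF y hy.le).const_mul x),
      intervalIntegral.integral_const_mul, intervalIntegral.integral_const_mul] at hpos
    rw [hg x, hg y]
    linarith
  -- limit of g a / a as a → 0+
  have htend : Tendsto (fun a => g a / a) (𝓝[>] (0:ℝ)) (𝓝 (1 / (1 - 2*α))) := by
    have key : Tendsto (fun a => ∫ b in (0:ℝ)..1, a⁻¹ * (ψ b * (1 - Real.exp (-a * ψ b))))
        (𝓝[>] (0:ℝ)) (𝓝 (∫ b in (0:ℝ)..1, ψ b ^ 2)) := by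
      apply intervalIntegral.tendsto_integral_filter_of_dominated_convergence
        (fun b => ψ b ^ 2)
      · filter_upwards [self_mem_nhdsWithin] with a (ha : 0 < a)
        have h := ((hIntF a ha.le).aestronglyMeasurable)
        rw [hIoc]
        exact h.const_mul a⁻¹
      · filter_upwards [self_mem_nhdsWithin] with a (ha : 0 < a)
        filter_upwards with b hb
        rw [hIoc] at hb
        have hb0 := hψpos b hb
        have ht : 0 ≤ a * ψ b := (mul_pos ha hb0).le
        have h1 : 0 ≤ 1 - Real.exp (-(a * ψ b)) := aux_one_sub_exp_nonneg ht
        have h2 : 1 - Real.exp (-(a * ψ b)) ≤ a * ψ b := aux_one_sub_exp_le _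
        rw [neg_mul]
        rw [Real.norm_eq_abs, abs_mul, abs_inv, abs_of_pos ha, abs_mul, abs_of_pos hb0,
          abs_of_nonneg h1, inv_mul_le_iff₀ ha]
        nlinarith
      · exact hIntSq
      · filter_upwards with b hb
        rw [hIoc] at hb
        have hb0 := hψpos b hb
        set c := ψ b with hc
        have h0 : HasDerivAt (fun a : ℝ => (-c) * a) (-c) 0 := by
          simpa using (hasDerivAt_id (0:ℝ)).const_mul (-c)
        have h1 : HasDerivAt (fun a : ℝ => Real.exp ((-c) * a)) (Real.exp ((-c)*0) * (-c)) 0 :=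
          h0.exp
        have h2 : HasDerivAt (fun a : ℝ => 1 - Real.exp ((-c) * a)) c 0 := by
          have := (hasDerivAt_const (0:ℝ) (1:ℝ)).sub h1
          exact this.congr_deriv (by simp)
        have h3 := hasDerivAt_iff_tendsto_slope.mp h2
        have h4 : Tendsto (slope (fun a : ℝ => 1 - Real.exp ((-c) * a)) 0)
            (𝓝[>] (0:ℝ)) (𝓝 c) :=
          h3.mono_left (nhdsWithin_mono 0 (fun y hy => ne_of_gt hy))
        have h5 : Tendsto (fun a : ℝ => (1 - Real.exp ((-c) * a)) / a)
            (𝓝[>] (0:ℝ)) (𝓝 c) := by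
          apply h4.congr
          intro a
          rw [slope_def_field]
          norm_num
        have h6 := h5.const_mul c
        have h7 : (fun a : ℝ => c * ((1 - Real.exp ((-c) * a)) / a))
            = fun a : ℝ => a⁻¹ * (c * (1 - Real.exp (-a * c))) := by
          funext a
          rw [neg_mul, neg_mul, mul_comm a c, div_eq_mul_inv]
          ring
        rw [h7] at h6
        have h8 : c * c = ψ b ^ 2 := by rw [← hc, sq]
        rw [h8] at h6
        exact h6
    have heq : ∀ a : ℝ, g a / a = ∫ b in (0:ℝ)..1, a⁻¹ * (ψ b * (1 - Real.exp (-a * ψ b))) := by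
      intro a
      rw [hg, div_eq_inv_mul, ← intervalIntegral.integral_const_mul]
    rw [hSqVal] at key
    exact key.congr (fun a => (heq a).symm)
  -- continuity of g at positive points
  have hgcont : ∀ x : ℝ, 0 < x → ContinuousAt g x := by
    intro x hx
    have : ContinuousAt (fun x => ∫ b in (0:ℝ)..1, ψ b * (1 - Real.exp (-x * ψ b))) x := by
      apply intervalIntegral.continuousAt_of_dominated_interval (bound := ψ)
      · filter_upwards [eventually_gt_nhds hx] with y hy
        rw [hIoc]
        exact (hIntF y hy.le).aestronglyMeasurable
      · filter_upwards [eventually_gt_nhds hx] with y hy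
        filter_upwards with b
        intro hb
        rw [hIoc] at hb
        have hb0 := hψpos b hb
        have ht : 0 ≤ y * ψ b := (mul_pos hy hb0).le
        have h1 : 0 ≤ 1 - Real.exp (-(y * ψ b)) := aux_one_sub_exp_nonneg ht
        have h2 : 1 - Real.exp (-(y * ψ b)) ≤ 1 := aux_one_sub_exp_le_one ht
        rw [neg_mul, Real.norm_eq_abs, abs_mul, abs_of_pos hb0, abs_of_nonneg h1]
        nlinarith
      · exact hInt1
      · filter_upwards with b
        intro hb
        apply Continuous.continuousAt
        fun_prop
    have hgeq : g = fun x => ∫ b in (0:ℝ)..1, ψ b * (1 - Real.exp (-x * ψ b)) :=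
      funext fun x => hg x
    rw [hgeq]
    exact this
  -- existence for θ > θc
  have hexists : ∀ θ : ℝ, θc < θ → ∃ A : ℝ, 0 < A ∧ A = θ * g A := by
    intro θ hθ
    have hθ0 : 0 < θ := hθcpos.trans hθ
    -- find small a with θ * g a > a
    have h1 : (1:ℝ) < θ * (1 / (1 - 2*α)) := by
      rw [hθcval] at hθ
      rw [mul_one_div, lt_div_iff₀ (by linarith)]
      linarith
    have h2 : ∀ᶠ a in 𝓝[>] (0:ℝ), 1 < θ * (g a / a) :=
      (htend.const_mul θ).eventually (eventually_gt_nhds h1)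
    have h3 : ∀ᶠ a in 𝓝[>] (0:ℝ), 0 < a := self_mem_nhdsWithin
    obtain ⟨a, ha1, ha0⟩ := (h2.and h3).exists
    have hga : a < θ * g a := by
      rw [mul_div_assoc', lt_div_iff₀ ha0] at ha1
      linarith
    -- large b
    set b₀ : ℝ := θ * C + 1 + a with hb₀def
    have hab : a < b₀ := by
      have : 0 ≤ θ * C := mul_nonneg hθ0.le hC0
      rw [hb₀def]; linarith
    have hb₀pos : 0 < b₀ := ha0.trans hab
    have hFb : θ * g b₀ - b₀ < 0 := by
      have := hgle b₀ hb₀pos.le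
      have h4 : θ * g b₀ ≤ θ * C := mul_le_mul_of_nonneg_left this hθ0.le
      rw [hb₀def]; push_cast; linarith
    have hFa : 0 < θ * g a - a := by linarith
    have hFcont : ContinuousOn (fun x => θ * g x - x) (Icc a b₀) := by
      intro x hx
      apply ContinuousAt.continuousWithinAt
      exact ((continuousAt_const.mul (hgcont x (ha0.trans_le hx.1))).sub continuousAt_id)
    have hmem : (0:ℝ) ∈ Icc (θ * g b₀ - b₀) (θ * g a - a) := ⟨hFb.le, hFa.le⟩
    obtain ⟨A, hAmem, hA⟩ := intermediate_value_Icc' hab.le hFcont hmem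
    have hA' : θ * g A - A = 0 := hA
    exact ⟨A, ha0.trans_le hAmem.1, by linarith⟩
  -- no solution when θ ≤ θc (given 0 < θ): from g A < A / θc
  have hnone : ∀ θ : ℝ, 0 < θ → ∀ A : ℝ, 0 < A → A = θ * g A → θc < θ := by
    intro θ hθ0 A hA hfix
    have h1 := hglt A hA
    rw [← hθcval] at h1
    have h2 : θ * g A < θ * (A * (1/θc)) := mul_lt_mul_of_pos_left h1 hθ0
    rw [← hfix] at h2
    -- A < θ * A / θc
    by_contra h
    push_neg at h
    have h3 : θ * (A * (1/θc)) ≤ θc * (A * (1/θc)) :=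
      mul_le_mul_of_nonneg_right h (by positivity)
    have h4 : θc * (A * (1/θc)) = A := by field_simp
    linarith
  -- uniqueness
  have huniq : ∀ θ : ℝ, 0 < θ → ∀ A₁ A₂ : ℝ,
      (0 < A₁ ∧ A₁ = θ * g A₁) → (0 < A₂ ∧ A₂ = θ * g A₂) → A₁ = A₂ := by
    intro θ hθ0 A₁ A₂ ⟨h1, e1⟩ ⟨h2, e2⟩
    rcases lt_trichotomy A₁ A₂ with h | h | h
    · have := hanti A₁ A₂ h1 h
      nlinarith
    · exact h
    · have := hanti A₂ A₁ h2 h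
      nlinarith
  refine ⟨?_, ?_, ?_⟩
  · rw [hθcval, hαdef]
    field_simp
    ring
  · intro θ hθ0
    constructor
    · rintro ⟨A, hA, hfix⟩
      exact hnone θ hθ0 A hA hfix
    · exact hexists θ
  · intro θ hθ
    have hθ0 : 0 < θ := hθcpos.trans hθ
    obtain ⟨A, hA⟩ := hexists θ hθ
    exact ⟨A, hA, fun B hB => huniq θ hθ0 B A hB hA⟩
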